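/- If an n-dimensional virtual tensor's mapping function f(I⃗) = S⃗·I⃗ + b(I⃗) has dimension 1 as a contiguous dimension (i.e., it is fully contiguous), then f is of the form f(I⃗) = (row-major offset of I⃗) + C for a constant C; consequently f maps the index set of the tensor bijectively onto a contiguous integer interval of length equal to the number of tensor elements. -/

import Mathlib

lemma weight_eq {n : ℕ} (D : Fin n → ℕ) (i : Fin n) :
    ∏ j : Fin (i : ℕ), D (Fin.rev (Fin.castLE i.is_lt.le j))
      = ∏ j ∈ Finset.Ioi (Fin.rev i), D j := by
  refine Finset.prod_bij (fun j _ => Fin.rev (Fin.castLE i.is_lt.le j)) ?_ ?_ ?_ ?_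
  · intro j _
    simp only [Finset.mem_Ioi, Fin.lt_iff_val_lt_val, Fin.val_rev, Fin.coe_castLE]
    have := j.isLt; have := i.isLt; omega
  · intro a _ b _ h
    have := congrArg Fin.val h
    simp only [Fin.val_rev, Fin.coe_castLE] at this
    have ha := a.isLt; have hb := b.isLt; have := i.isLt
    exact Fin.ext (by omega)
  · intro l hl
    simp only [Finset.mem_Ioi, Fin.lt_iff_val_lt_val, Fin.val_rev] at hl
    have hl2 := l.isLt; have hi := i.isLt
    refine ⟨⟨(Fin.rev l : ℕ), by simp only [Fin.val_rev]; omega⟩, Finset.mem_univ _, ?_⟩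
    exact Fin.ext (by simp only [Fin.val_rev, Fin.coe_castLE]; omega)
  · intro j _; rfl

lemma key_nat {n : ℕ} (D : Fin n → ℕ) (f : ∀ i, Fin (D i)) :
    ((finPiFinEquiv (n := fun i => D (Fin.rev i)) (fun i => f (Fin.rev i))) : ℕ)
      = ∑ i, (f i : ℕ) * ∏ j ∈ Finset.Ioi i, D j := by
  rw [finPiFinEquiv_apply]
  refine Fintype.sum_equiv Fin.revPerm _ _ fun i => ?_
  simp only [Fin.revPerm_apply]
  rw [weight_eq]
  rfl

lemma bij_nat {n : ℕ} (D : Fin n → ℕ) :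
    Set.BijOn (fun I : Fin n → ℕ => ∑ i, I i * ∏ j ∈ Finset.Ioi i, D j)
      {I | ∀ i, I i < D i} (Set.Iio (∏ i, D i)) := by
  have hP : (∏ i, D (Fin.rev i)) = ∏ i, D i :=
    Fintype.prod_equiv Fin.revPerm _ _ fun i => rfl
  refine ⟨?_, ?_, ?_⟩
  · intro I hI
    have := key_nat D (fun i => ⟨I i, hI i⟩)
    have hlt := (finPiFinEquiv (n := fun i => D (Fin.rev i))
      (fun i => (⟨I (Fin.rev i), hI _⟩ : Fin (D (Fin.rev i))))).isLt
    simp only [Set.mem_Iio]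
    calc ∑ i, I i * ∏ j ∈ Finset.Ioi i, D j = _ := this.symm
    _ < ∏ i, D (Fin.rev i) := hlt
    _ = ∏ i, D i := hP
  · intro I hI I' hI' h
    have h1 := key_nat D (fun i => ⟨I i, hI i⟩)
    have h2 := key_nat D (fun i => ⟨I' i, hI' i⟩)
    simp only at h
    rw [← h1, ← h2] at h
    have := finPiFinEquiv.injective (Fin.val_injective h)
    funext i
    have := congrFun this (Fin.rev i)
    simpa [Fin.rev_rev] using congrArg Fin.val this
  · intro m hm
    simp only [Set.mem_Iio] at hm
    rw [← hP] at hm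
    set f := finPiFinEquiv.symm (⟨m, hm⟩ : Fin (∏ i, D (Fin.rev i))) with hf
    refine ⟨fun i => (f (Fin.rev i) : ℕ), fun i => ?_, ?_⟩
    · have := (f (Fin.rev i)).isLt
      simpa [Fin.rev_rev] using this
    · have hk := key_nat D (fun i =>
        (⟨(f (Fin.rev i) : ℕ), by simpa [Fin.rev_rev] using (f (Fin.rev i)).isLt⟩ : Fin (D i)))
      simp only
      rw [← hk]
      have hff : (fun i => ((⟨(f (Fin.rev (Fin.rev i)) : ℕ), by
          simpa [Fin.rev_rev] using (f (Fin.rev (Fin.rev i))).isLt⟩ : Fin (D (Fin.rev i))))) = f := by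
        funext i; exact Fin.ext (congrArg (fun j => ((f j : ℕ))) (Fin.rev_rev i))
      rw [hff, Equiv.apply_symm_apply]

theorem stmt5 {n : ℕ} (D S : Fin n → ℕ) (b : (Fin n → ℕ) → ℤ)
    (hS : ∀ i, S i = ∏ j ∈ Finset.Ioi i, D j)
    (hb : ∀ I I' : Fin n → ℕ, b I = b I') :
    ∃ C : ℤ,
      (∀ I : Fin n → ℕ, (∀ i, I i < D i) →
        (∑ i, (S i : ℤ) * I i) + b I
          = (∑ i, (I i : ℤ) * ∏ j ∈ Finset.Ioi i, (D j : ℤ)) + C) ∧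
      Set.BijOn (fun I : Fin n → ℕ => (∑ i, (S i : ℤ) * I i) + b I)
        {I | ∀ i, I i < D i}
        (Set.Ico C (C + ∏ i, (D i : ℤ))) := by
  refine ⟨b (fun _ => 0), ?_, ?_⟩
  all_goals
    have hfun : ∀ I : Fin n → ℕ, (∑ i, (S i : ℤ) * I i) + b I
        = ((∑ i, I i * ∏ j ∈ Finset.Ioi i, D j : ℕ) : ℤ) + b (fun _ => 0) := by
      intro I
      rw [hb I (fun _ => 0)]
      congr 1
      push_cast
      refine Finset.sum_congr rfl fun i _ => ?_
      rw [hS i]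
      push_cast
      ring
  · intro I _
    rw [hfun I]
    congr 1
    push_cast
    refine Finset.sum_congr rfl fun i _ => ?_
    ring
  · have hPD : ((∏ i, D i : ℕ) : ℤ) = ∏ i, (D i : ℤ) := by push_cast; ring
    have hbij := bij_nat D
    set C := b (fun _ => 0) with hC
    have heq : (fun I : Fin n → ℕ => (∑ i, (S i : ℤ) * I i) + b I)
        = fun I => ((∑ i, I i * ∏ j ∈ Finset.Ioi i, D j : ℕ) : ℤ) + C := funext hfun
    rw [heq]
    refine ⟨?_, ?_, ?_⟩
    · intro I hI
      have := hbij.mapsTo hI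
      simp only [Set.mem_Iio] at this
      simp only [Set.mem_Ico, ← hPD]
      omega
    · intro I hI I' hI' h
      refine hbij.injOn hI hI' ?_
      simp only at h
      omega
    · intro m hm
      simp only [Set.mem_Ico, ← hPD] at hm
      have h0 : (0 : ℤ) ≤ m - C := by omega
      have h1 : (m - C).toNat < ∏ i, D i := by omega
      obtain ⟨I, hI, hval⟩ := hbij.surjOn (Set.mem_Iio.mpr h1)
      refine ⟨I, hI, ?_⟩
      simp only at hval ⊢
      rw [hval]
      omega
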